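/- The maps d and H on the decorated-tree space V_t satisfy the contracting-homotopy identity d ∘ H + H ∘ d = id_{V_t}. (This is the tree-local form of the Lemma stating that d_ψH + Hd_ψ is zero in arity one and the identity in all other arities on the cofree cooperad.) -/

import Mathlib

/-- A binary tree: either a leaf, or an internal vertex carrying an ordered
pair of binary subtrees. -/
inductive BTree where
  | leaf : BTree
  | node : BTree → BTree → BTree

namespace BTree

/-- The number of leaves of a binary tree. -/
def leaves : BTree → ℕ
  | leaf => 1
  | node l r => l.leaves + r.leaves

/-- The number of internal vertices of a binary tree. -/
def internal : BTree → ℕ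
  | leaf => 0
  | node l r => l.internal + r.internal + 1

/-- The weights `ω(v) = leaves(l) · leaves(r)` of the internal vertices of a
binary tree, listed according to a fixed linear order on the internal
vertices. -/
def weightList : BTree → List ℕ
  | leaf => []
  | node l r => l.leaves * r.leaves :: (l.weightList ++ r.weightList)

theorem weightList_length (t : BTree) : t.weightList.length = t.internal := by
  induction t with
  | leaf => rfl
  | node l r hl hr => simp [weightList, internal, hl, hr]

/-- The weight `ω(vᵢ)` of the `i`-th internal vertex (in the fixed linear
order `v₁ < ⋯ < vₙ` on the internal vertices). -/
def omega (t : BTree) (v : Fin t.internal) : ℕ :=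
  t.weightList.get (Fin.cast t.weightList_length.symm v)

end BTree

/-- The two possible decorations `μ` (degree 1) and `β` (degree 2) of an
internal vertex. -/
inductive Label where
  | mu : Label
  | beta : Label
  deriving DecidableEq

/-- `V_t`: the ℚ-vector space with basis the set of labelings
`ℓ : {v₁, …, vₙ} → {μ, β}` of the internal vertices of `t`. -/
abbrev Vt (t : BTree) : Type := (Fin t.internal → Label) →₀ ℚ

/-- The Koszul sign `ε(ℓ, v) = (−1)^{#{w < v : ℓ(w) = μ}}`. -/
def koszulSign (t : BTree) (ℓ : Fin t.internal → Label) (v : Fin t.internal) : ℚ :=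
  (-1 : ℚ) ^ (Finset.univ.filter fun w => w < v ∧ ℓ w = Label.mu).card

/-- The coderivation `d` on basis vectors:
`d(ℓ) := Σ_{v : ℓ(v) = μ} ε(ℓ, v) · ℓ[v ↦ β]`. -/
noncomputable def dMap (t : BTree) : Vt t →ₗ[ℚ] Vt t :=
  Finsupp.lift (Vt t) ℚ (Fin t.internal → Label) fun ℓ =>
    ∑ v ∈ Finset.univ.filter (fun v => ℓ v = Label.mu),
      koszulSign t ℓ v • Finsupp.single (Function.update ℓ v Label.beta) (1 : ℚ)

/-- The homotopy `H` on basis vectors: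
`H(ℓ) := Σ_{v : ℓ(v) = β} (ω(v) / C(n+1, 2)) · ε(ℓ, v) · ℓ[v ↦ μ]`. -/
noncomputable def hMap (t : BTree) : Vt t →ₗ[ℚ] Vt t :=
  Finsupp.lift (Vt t) ℚ (Fin t.internal → Label) fun ℓ =>
    ∑ v ∈ Finset.univ.filter (fun v => ℓ v = Label.beta),
      ((t.omega v : ℚ) / ((t.internal + 1).choose 2 : ℚ) * koszulSign t ℓ v) •
        Finsupp.single (Function.update ℓ v Label.mu) (1 : ℚ)



lemma choose_two_add (a b : ℕ) : (a + b).choose 2 = a.choose 2 + b.choose 2 + a * b := by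
  induction a with
  | zero => simp
  | succ a ih =>
    have h1 : ∀ n : ℕ, (n + 1).choose 2 = n.choose 2 + n := by
      intro n
      rw [Nat.choose_succ_succ]
      simp [Nat.choose_one_right, Nat.add_comm]
    have h2 : a + 1 + b = (a + b) + 1 := by omega
    rw [h2, h1, ih, h1]
    ring

lemma leaves_eq_internal_add_one (t : BTree) : t.leaves = t.internal + 1 := by
  induction t with
  | leaf => rfl
  | node l r hl hr => simp [BTree.leaves, BTree.internal, hl, hr]; omega

lemma sum_weightList (t : BTree) : t.weightList.sum = t.leaves.choose 2 := by
  induction t with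
  | leaf => simp [BTree.weightList, BTree.leaves]
  | node l r hl hr =>
    simp [BTree.weightList, BTree.leaves, hl, hr, choose_two_add]
    ring

lemma sum_omega (t : BTree) :
    ∑ v : Fin t.internal, (t.omega v : ℚ) = (((t.internal + 1).choose 2 : ℕ) : ℚ) := by
  have h1 : ∑ v : Fin t.internal, t.omega v = t.weightList.sum := by
    rw [← Fin.sum_univ_getElem t.weightList]
    exact Fintype.sum_equiv (finCongr t.weightList_length.symm) _ _ (fun v => rfl)
  have h2 := sum_weightList t
  rw [leaves_eq_internal_add_one] at h2
  have h3 : (∑ v : Fin t.internal, t.omega v) = (t.internal + 1).choose 2 := h1.trans h2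
  exact_mod_cast congrArg (Nat.cast : ℕ → ℚ) h3

-- sign lemmas
lemma koszulSign_sq (t : BTree) (ℓ : Fin t.internal → Label) (v : Fin t.internal) :
    koszulSign t ℓ v * koszulSign t ℓ v = 1 := by
  unfold koszulSign
  rw [← pow_add]
  exact Even.neg_one_pow ⟨_, rfl⟩

lemma koszulSign_update_not_lt (t : BTree) (ℓ : Fin t.internal → Label)
    {u v : Fin t.internal} (h : ¬ u < v) (x : Label) :
    koszulSign t (Function.update ℓ u x) v = koszulSign t ℓ v := by
  have hfilter : (Finset.univ.filter fun w => w < v ∧ Function.update ℓ u x w = Label.mu) =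
      (Finset.univ.filter fun w => w < v ∧ ℓ w = Label.mu) := by
    apply Finset.filter_congr
    intro w _
    rcases eq_or_ne w u with rfl | hw
    · exact ⟨fun hh => absurd hh.1 h, fun hh => absurd hh.1 h⟩
    · rw [Function.update_of_ne hw]
  simp only [koszulSign, hfilter]

lemma koszulSign_update_lt (t : BTree) (ℓ : Fin t.internal → Label)
    {u v : Fin t.internal} (h : u < v) {x : Label} (hx : x ≠ ℓ u) :
    koszulSign t (Function.update ℓ u x) v = -koszulSign t ℓ v := by
  unfold koszulSign
  cases hu : ℓ u with
  | mu =>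
    have hxb : x = Label.beta := by cases x <;> simp_all
    subst hxb
    have hset : (Finset.univ.filter fun w => w < v ∧ ℓ w = Label.mu) =
        insert u (Finset.univ.filter fun w =>
          w < v ∧ Function.update ℓ u Label.beta w = Label.mu) := by
      ext w
      rcases eq_or_ne w u with rfl | hw
      · simp [h, hu]
      · simp [hw, Function.update_of_ne hw]
    have hnot : u ∉ (Finset.univ.filter fun w =>
        w < v ∧ Function.update ℓ u Label.beta w = Label.mu) := by simp
    rw [hset, Finset.card_insert_of_notMem hnot, pow_succ]
    ring
  | beta =>
    have hxm : x = Label.mu := by cases x <;> simp_all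
    subst hxm
    have hset : (Finset.univ.filter fun w =>
        w < v ∧ Function.update ℓ u Label.mu w = Label.mu) =
        insert u (Finset.univ.filter fun w => w < v ∧ ℓ w = Label.mu) := by
      ext w
      rcases eq_or_ne w u with rfl | hw
      · simp [h]
      · simp [hw, Function.update_of_ne hw]
    have hnot : u ∉ (Finset.univ.filter fun w => w < v ∧ ℓ w = Label.mu) := by
      simp [hu]
    rw [hset, Finset.card_insert_of_notMem hnot, pow_succ]
    ring

lemma dMap_single (t : BTree) (ℓ : Fin t.internal → Label) :
    dMap t (Finsupp.single ℓ 1) =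
      ∑ v ∈ Finset.univ.filter (fun v => ℓ v = Label.mu),
        koszulSign t ℓ v • Finsupp.single (Function.update ℓ v Label.beta) (1 : ℚ) := by
  rw [dMap, Finsupp.lift_apply, Finsupp.sum_single_index, one_smul]
  simp

lemma hMap_single (t : BTree) (ℓ : Fin t.internal → Label) :
    hMap t (Finsupp.single ℓ 1) =
      ∑ v ∈ Finset.univ.filter (fun v => ℓ v = Label.beta),
        ((t.omega v : ℚ) / ((t.internal + 1).choose 2 : ℚ) * koszulSign t ℓ v) •
          Finsupp.single (Function.update ℓ v Label.mu) (1 : ℚ) := by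
  rw [hMap, Finsupp.lift_apply, Finsupp.sum_single_index, one_smul]
  simp

-- d applied to an updated labeling, with the diagonal term split off
lemma dMap_single_update (t : BTree) (ℓ : Fin t.internal → Label)
    {v : Fin t.internal} (hv : ℓ v = Label.beta) :
    dMap t (Finsupp.single (Function.update ℓ v Label.mu) 1) =
      koszulSign t ℓ v • Finsupp.single ℓ (1 : ℚ) +
      ∑ w ∈ Finset.univ.filter (fun w => ℓ w = Label.mu),
        koszulSign t (Function.update ℓ v Label.mu) w •
          Finsupp.single (Function.update (Function.update ℓ v Label.mu) w Label.beta) (1 : ℚ) := by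
  rw [dMap_single]
  have hset : (Finset.univ.filter fun w => Function.update ℓ v Label.mu w = Label.mu) =
      insert v (Finset.univ.filter fun w => ℓ w = Label.mu) := by
    ext w
    rcases eq_or_ne w v with rfl | hw
    · simp
    · simp [hw, Function.update_of_ne hw]
  have hnot : v ∉ (Finset.univ.filter fun w => ℓ w = Label.mu) := by simp [hv]
  rw [hset, Finset.sum_insert hnot]
  congr 1
  have h1 : koszulSign t (Function.update ℓ v Label.mu) v = koszulSign t ℓ v :=
    koszulSign_update_not_lt t ℓ (lt_irrefl v) _
  have h2 : Function.update (Function.update ℓ v Label.mu) v Label.beta = ℓ := by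
    rw [Function.update_idem, ← hv, Function.update_eq_self]
  rw [h1, h2]

lemma hMap_single_update (t : BTree) (ℓ : Fin t.internal → Label)
    {w : Fin t.internal} (hw : ℓ w = Label.mu) :
    hMap t (Finsupp.single (Function.update ℓ w Label.beta) 1) =
      ((t.omega w : ℚ) / ((t.internal + 1).choose 2 : ℚ) * koszulSign t ℓ w) •
        Finsupp.single ℓ (1 : ℚ) +
      ∑ v ∈ Finset.univ.filter (fun v => ℓ v = Label.beta),
        ((t.omega v : ℚ) / ((t.internal + 1).choose 2 : ℚ) *
          koszulSign t (Function.update ℓ w Label.beta) v) •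
          Finsupp.single (Function.update (Function.update ℓ w Label.beta) v Label.mu) (1 : ℚ) := by
  rw [hMap_single]
  have hset : (Finset.univ.filter fun v => Function.update ℓ w Label.beta v = Label.beta) =
      insert w (Finset.univ.filter fun v => ℓ v = Label.beta) := by
    ext v
    rcases eq_or_ne v w with rfl | hvw
    · simp
    · simp [hvw, Function.update_of_ne hvw]
  have hnot : w ∉ (Finset.univ.filter fun v => ℓ v = Label.beta) := by simp [hw]
  rw [hset, Finset.sum_insert hnot]
  congr 1
  have h1 : koszulSign t (Function.update ℓ w Label.beta) w = koszulSign t ℓ w :=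
    koszulSign_update_not_lt t ℓ (lt_irrefl w) _
  have h2 : Function.update (Function.update ℓ w Label.beta) w Label.mu = ℓ := by
    rw [Function.update_idem, ← hw, Function.update_eq_self]
  rw [h1, h2]

lemma key (t : BTree) (ht : 1 ≤ t.internal) (ℓ : Fin t.internal → Label) :
    dMap t (hMap t (Finsupp.single ℓ 1)) + hMap t (dMap t (Finsupp.single ℓ 1)) =
      Finsupp.single ℓ 1 := by
  classical
  have hC : (((t.internal + 1).choose 2 : ℕ) : ℚ) ≠ 0 := by
    have h := Nat.choose_pos (show 2 ≤ t.internal + 1 by omega)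
    exact_mod_cast h.ne'
  rw [hMap_single, dMap_single, map_sum, map_sum]
  have e1 : ∑ v ∈ Finset.univ.filter (fun v => ℓ v = Label.beta),
      dMap t (((t.omega v : ℚ) / ((t.internal + 1).choose 2 : ℚ) * koszulSign t ℓ v) •
        Finsupp.single (Function.update ℓ v Label.mu) (1 : ℚ)) =
      ∑ v ∈ Finset.univ.filter (fun v => ℓ v = Label.beta),
        ((t.omega v : ℚ) / ((t.internal + 1).choose 2 : ℚ) * koszulSign t ℓ v) •
        (koszulSign t ℓ v • Finsupp.single ℓ (1 : ℚ) +
          ∑ w ∈ Finset.univ.filter (fun w => ℓ w = Label.mu),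
            koszulSign t (Function.update ℓ v Label.mu) w •
              Finsupp.single (Function.update (Function.update ℓ v Label.mu) w Label.beta)
                (1 : ℚ)) := by
    apply Finset.sum_congr rfl
    intro v hv
    rw [map_smul, dMap_single_update t ℓ (Finset.mem_filter.mp hv).2]
  have e2 : ∑ w ∈ Finset.univ.filter (fun w => ℓ w = Label.mu),
      hMap t ((koszulSign t ℓ w) •
        Finsupp.single (Function.update ℓ w Label.beta) (1 : ℚ)) =
      ∑ w ∈ Finset.univ.filter (fun w => ℓ w = Label.mu),
        (koszulSign t ℓ w) •
        (((t.omega w : ℚ) / ((t.internal + 1).choose 2 : ℚ) * koszulSign t ℓ w) •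
            Finsupp.single ℓ (1 : ℚ) +
          ∑ v ∈ Finset.univ.filter (fun v => ℓ v = Label.beta),
            ((t.omega v : ℚ) / ((t.internal + 1).choose 2 : ℚ) *
              koszulSign t (Function.update ℓ w Label.beta) v) •
              Finsupp.single (Function.update (Function.update ℓ w Label.beta) v Label.mu)
                (1 : ℚ)) := by
    apply Finset.sum_congr rfl
    intro w hw
    rw [map_smul, hMap_single_update t ℓ (Finset.mem_filter.mp hw).2]
  rw [e1, e2]
  simp only [smul_add, Finset.smul_sum, smul_smul, Finset.sum_add_distrib]
  rw [add_add_add_comm]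
  have diag : (∑ v ∈ Finset.univ.filter (fun v => ℓ v = Label.beta),
        ((t.omega v : ℚ) / ((t.internal + 1).choose 2 : ℚ) * koszulSign t ℓ v *
          koszulSign t ℓ v) • Finsupp.single ℓ (1 : ℚ)) +
      (∑ w ∈ Finset.univ.filter (fun w => ℓ w = Label.mu),
        (koszulSign t ℓ w * ((t.omega w : ℚ) / ((t.internal + 1).choose 2 : ℚ) *
          koszulSign t ℓ w)) • Finsupp.single ℓ (1 : ℚ)) = Finsupp.single ℓ (1 : ℚ) := by
    have d1 : ∀ v : Fin t.internal,
        (t.omega v : ℚ) / ((t.internal + 1).choose 2 : ℚ) * koszulSign t ℓ v *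
          koszulSign t ℓ v = (t.omega v : ℚ) / ((t.internal + 1).choose 2 : ℚ) := by
      intro v; rw [mul_assoc, koszulSign_sq, mul_one]
    have d2 : ∀ w : Fin t.internal,
        koszulSign t ℓ w * ((t.omega w : ℚ) / ((t.internal + 1).choose 2 : ℚ) *
          koszulSign t ℓ w) = (t.omega w : ℚ) / ((t.internal + 1).choose 2 : ℚ) := by
      intro w
      rw [mul_comm, mul_assoc, koszulSign_sq, mul_one]
    simp only [d1, d2]
    rw [← Finset.sum_smul, ← Finset.sum_smul, ← add_smul]
    have hsplit : (∑ v ∈ Finset.univ.filter (fun v => ℓ v = Label.beta),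
          (t.omega v : ℚ) / ((t.internal + 1).choose 2 : ℚ)) +
        (∑ v ∈ Finset.univ.filter (fun v => ℓ v = Label.mu),
          (t.omega v : ℚ) / ((t.internal + 1).choose 2 : ℚ)) =
        ∑ v : Fin t.internal, (t.omega v : ℚ) / ((t.internal + 1).choose 2 : ℚ) := by
      have hμ : (Finset.univ.filter (fun v => ℓ v = Label.mu)) =
          (Finset.univ.filter (fun v => ¬ ℓ v = Label.beta)) := by
        apply Finset.filter_congr
        intro v _
        cases h : ℓ v <;> simp
      rw [hμ]
      exact Finset.sum_filter_add_sum_filter_not _ _ _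
    rw [hsplit, ← Finset.sum_div, sum_omega, div_self hC, one_smul]
  have cross : (∑ v ∈ Finset.univ.filter (fun v => ℓ v = Label.beta),
        ∑ w ∈ Finset.univ.filter (fun w => ℓ w = Label.mu),
        ((t.omega v : ℚ) / ((t.internal + 1).choose 2 : ℚ) * koszulSign t ℓ v *
          koszulSign t (Function.update ℓ v Label.mu) w) •
          Finsupp.single (Function.update (Function.update ℓ v Label.mu) w Label.beta)
            (1 : ℚ)) +
      (∑ w ∈ Finset.univ.filter (fun w => ℓ w = Label.mu),
        ∑ v ∈ Finset.univ.filter (fun v => ℓ v = Label.beta),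
        (koszulSign t ℓ w * ((t.omega v : ℚ) / ((t.internal + 1).choose 2 : ℚ) *
          koszulSign t (Function.update ℓ w Label.beta) v)) •
          Finsupp.single (Function.update (Function.update ℓ w Label.beta) v Label.mu)
            (1 : ℚ)) = 0 := by
    rw [Finset.sum_comm (s := Finset.univ.filter (fun w => ℓ w = Label.mu))]
    rw [← Finset.sum_add_distrib]
    apply Finset.sum_eq_zero
    intro v hv
    rw [← Finset.sum_add_distrib]
    apply Finset.sum_eq_zero
    intro w hw
    have hv' : ℓ v = Label.beta := (Finset.mem_filter.mp hv).2
    have hw' : ℓ w = Label.mu := (Finset.mem_filter.mp hw).2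
    have hvw : v ≠ w := by
      intro h
      rw [h, hw'] at hv'
      exact Label.noConfusion hv'
    have hupd : Function.update (Function.update ℓ w Label.beta) v Label.mu =
        Function.update (Function.update ℓ v Label.mu) w Label.beta :=
      (Function.update_comm hvw _ _ _).symm
    rw [hupd, ← add_smul]
    have hcoef : (t.omega v : ℚ) / ((t.internal + 1).choose 2 : ℚ) * koszulSign t ℓ v *
          koszulSign t (Function.update ℓ v Label.mu) w +
        koszulSign t ℓ w * ((t.omega v : ℚ) / ((t.internal + 1).choose 2 : ℚ) *
          koszulSign t (Function.update ℓ w Label.beta) v) = 0 := by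
      rcases lt_trichotomy v w with hlt | heq | hgt
      · have s1 : koszulSign t (Function.update ℓ v Label.mu) w = -koszulSign t ℓ w :=
          koszulSign_update_lt t ℓ hlt (by rw [hv']; simp)
        have s2 : koszulSign t (Function.update ℓ w Label.beta) v = koszulSign t ℓ v :=
          koszulSign_update_not_lt t ℓ (not_lt.mpr hlt.le) _
        rw [s1, s2]; ring
      · exact absurd heq hvw
      · have s1 : koszulSign t (Function.update ℓ v Label.mu) w = koszulSign t ℓ w :=
          koszulSign_update_not_lt t ℓ (not_lt.mpr hgt.le) _
        have s2 : koszulSign t (Function.update ℓ w Label.beta) v = -koszulSign t ℓ v :=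
          koszulSign_update_lt t ℓ hgt (by rw [hw']; simp)
        rw [s1, s2]; ring
    rw [hcoef, zero_smul]
  rw [diag, cross, add_zero]

/-- The maps `d` and `H` on the decorated-tree space `V_t` satisfy the
contracting-homotopy identity `d ∘ H + H ∘ d = id_{V_t}`. -/
theorem dMap_hMap_contracting_homotopy (t : BTree) (ht : 1 ≤ t.internal) :
    (dMap t).comp (hMap t) + (hMap t).comp (dMap t) = LinearMap.id := by
  apply Finsupp.lhom_ext
  intro ℓ b
  have hb : Finsupp.single ℓ b = b • Finsupp.single ℓ (1 : ℚ) := by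
    rw [Finsupp.smul_single, smul_eq_mul, mul_one]
  rw [hb]
  simp only [LinearMap.add_apply, LinearMap.comp_apply, LinearMap.id_apply, map_smul]
  rw [key t ht ℓ]
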